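/- Fix n ≥ 1 and let W : Matrix (Fin n × Fin n) (Fin n × Fin n) ℂ with Matrix.trace W = 1. Suppose that W ⊗₁₂ T is positive on pure tensors with respect to the bipartition H_A ⊗ H_B, in the sense that for all positive semidefinite A, B : Matrix (Fin n × Fin n) (Fin n × Fin n) ℂ, the number Matrix.trace ((A ⊗_AB B) * (W ⊗₁₂ T)) is a nonnegative real (here A ⊗_AB B has entry A ((a₁, a₂), (c₁, c₂)) * B ((b₂, b₁), (d₂, d₁))). Then W is positive semidefinite. -/

import Mathlib

open Matrix ComplexOrder

/-- The normalized maximally entangled projection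
`T ((i,j),(k,l)) = (1/n) δ_{ij} δ_{kl}`. -/
noncomputable def Tmat (n : ℕ) : Matrix (Fin n × Fin n) (Fin n × Fin n) ℂ :=
  Matrix.of fun p q =>
    (1 / n : ℂ) * (if p.1 = p.2 then 1 else 0) * (if q.1 = q.2 then 1 else 0)

/-- The coupling of `W` on the nonlocal subsystem `A₁B₁` with `V` on `A₂B₂`; the total system
is indexed by `((a₁, a₂), (b₂, b₁))`. -/
def tens12 (n : ℕ) (W V : Matrix (Fin n × Fin n) (Fin n × Fin n) ℂ) :
    Matrix ((Fin n × Fin n) × (Fin n × Fin n)) ((Fin n × Fin n) × (Fin n × Fin n)) ℂ :=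
  Matrix.of fun p q =>
    W ((p.1.1, p.2.2)) ((q.1.1, q.2.2)) * V ((p.1.2, p.2.1)) ((q.1.2, q.2.1))

/-- The coupling of `A` on the local subsystem `H_A = A₁A₂` with `B` on `H_B = B₂B₁`. -/
def tensAB (n : ℕ) (A B : Matrix (Fin n × Fin n) (Fin n × Fin n) ℂ) :
    Matrix ((Fin n × Fin n) × (Fin n × Fin n)) ((Fin n × Fin n) × (Fin n × Fin n)) ℂ :=
  Matrix.of fun p q => A p.1 q.1 * B p.2 q.2

/-- A rank-one matrix `x x*` is positive semidefinite. -/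
lemma psd_vecMulVec_aux {ι : Type*} [Fintype ι] (x : ι → ℂ) :
    (Matrix.vecMulVec x (star x)).PosSemidef := by
  refine Matrix.PosSemidef.of_dotProduct_mulVec_nonneg ?_ ?_
  · ext i j
    simp [vecMulVec_apply, conjTranspose_apply, mul_comm]
  · intro v
    have h1 : (vecMulVec x (star x)) *ᵥ v = fun i => x i * (star x ⬝ᵥ v) := by
      funext i
      simp [mulVec, dotProduct, vecMulVec_apply, Finset.mul_sum, mul_assoc]
    have h2 : star v ⬝ᵥ ((vecMulVec x (star x)) *ᵥ v)
        = star (star x ⬝ᵥ v) * (star x ⬝ᵥ v) := by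
      rw [h1]
      simp [dotProduct, Finset.sum_mul, star_sum, mul_comm, mul_left_comm, mul_assoc]
    rw [h2]
    exact star_mul_self_nonneg _

/-- A complex matrix with nonnegative quadratic form is positive semidefinite. -/
lemma posSemidef_of_dotProduct_aux {ι : Type*} [Fintype ι] [DecidableEq ι]
    (M : Matrix ι ι ℂ) (h : ∀ x : ι → ℂ, 0 ≤ star x ⬝ᵥ M *ᵥ x) : M.PosSemidef := by
  refine Matrix.PosSemidef.of_dotProduct_mulVec_nonneg ?_ h
  rw [Matrix.isHermitian_iff_isSymmetric,
    LinearMap.isSymmetric_iff_inner_map_self_real]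
  intro v
  have hz := h ((WithLp.equiv 2 (ι → ℂ)) v)
  set z : ℂ := star ((WithLp.equiv 2 (ι → ℂ)) v) ⬝ᵥ M *ᵥ ((WithLp.equiv 2 (ι → ℂ)) v) with hzdef
  have hre : z = (z.re : ℂ) := by
    obtain ⟨h1, h2⟩ := Complex.nonneg_iff.mp hz
    exact (Complex.ext rfl h2.symm : z = Complex.ofReal z.re)
  have hinner : (inner ℂ (Matrix.toEuclideanLin M v) v : ℂ) = star z := by
    rw [EuclideanSpace.inner_eq_star_dotProduct, ofLp_toEuclideanLin_apply,
      dotProduct_comm, star_dotProduct, hzdef]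
    rfl
  rw [hinner, hre]
  simp
lemma key_trace_aux (n : ℕ) (W : Matrix (Fin n × Fin n) (Fin n × Fin n) ℂ) (x : Fin n × Fin n → ℂ) :
    Matrix.trace (tensAB n (vecMulVec x (star x))
        (vecMulVec (fun p : Fin n × Fin n => if p.1 = p.2 then (1:ℂ) else 0)
          (star fun p : Fin n × Fin n => if p.1 = p.2 then (1:ℂ) else 0)) * tens12 n W (Tmat n))
      = (1 / n : ℂ) * (star x ⬝ᵥ W *ᵥ x) := by
  have hsum : (1 / n : ℂ) * (star x ⬝ᵥ W *ᵥ x)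
      = ∑ q : Fin n × Fin n, ∑ p : Fin n × Fin n,
          x q * star (x p) * W p q * (n : ℂ)⁻¹ := by
    rw [Finset.sum_comm]
    simp only [dotProduct, mulVec, Finset.mul_sum, Pi.star_apply]
    refine Finset.sum_congr rfl fun p _ => Finset.sum_congr rfl fun q _ => ?_
    ring
  rw [hsum, Matrix.trace]
  simp only [diag_apply, mul_apply, tensAB, tens12, Tmat, vecMulVec_apply, of_apply,
    Pi.star_apply, apply_ite (star : ℂ → ℂ), star_one, star_zero, Fintype.sum_prod_type]
  simp only [mul_ite, ite_mul, one_mul, mul_one, zero_mul, mul_zero, Finset.sum_ite_irrel, Finset.sum_ite_eq,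
    Finset.sum_ite_eq', Finset.mem_univ, if_true, Finset.sum_const_zero]
  refine Finset.sum_congr rfl fun a _ => Finset.sum_congr rfl fun b _ =>
    Finset.sum_congr rfl fun c _ => Finset.sum_congr rfl fun d _ => ?_
  ring

/-- If the trace-one operator `W ⊗₁₂ T` is positive on pure tensors for the local bipartition
`H_A ⊗ H_B`, then `W` is positive semidefinite. -/
theorem popt_total_implies_posSemidef (n : ℕ) (hn : 1 ≤ n)
    (W : Matrix (Fin n × Fin n) (Fin n × Fin n) ℂ)
    (htr : Matrix.trace W = 1)
    (hPOPT : ∀ A B : Matrix (Fin n × Fin n) (Fin n × Fin n) ℂ,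
      A.PosSemidef → B.PosSemidef →
        ∃ r : ℝ, 0 ≤ r ∧ Matrix.trace (tensAB n A B * tens12 n W (Tmat n)) = r) :
    W.PosSemidef := by
  apply posSemidef_of_dotProduct_aux
  intro x
  obtain ⟨r, hr, htrace⟩ := hPOPT _ _ (psd_vecMulVec_aux x)
    (psd_vecMulVec_aux (fun p : Fin n × Fin n => if p.1 = p.2 then (1:ℂ) else 0))
  rw [key_trace_aux n W x] at htrace
  have hn0 : (n : ℂ) ≠ 0 := by
    exact_mod_cast Nat.one_le_iff_ne_zero.mp hn
  have : star x ⬝ᵥ W *ᵥ x = ((n * r : ℝ) : ℂ) := by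
    field_simp at htrace
    rw [htrace]
    push_cast
    ring
  rw [this]
  rw [Complex.nonneg_iff]
  constructor
  · simp [mul_nonneg (Nat.cast_nonneg n) hr]
  · simp
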